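/- Let β₁, β₂ ∈ [0, 1/4] and γ₁ > -β₁, γ₂ > -β₂. Then there is a constant C_d such that for all 0 ≤ s < t and x, y ∈ ℝ^d, ∫_s^t ∫_{ℝ^d} ϱ^{β₁}_{γ₁}(t-r, x-z) ϱ^{β₂}_{γ₂}(r-s, z-y) dz dr ≤ C_d [ ϱ^0_{γ₁+γ₂+β₁+β₂}(t-s,x-y) B(γ₁+β₁+β₂, 1+γ₂) + ϱ^{β₂}_{γ₁+γ₂+β₁}(t-s,x-y) B(γ₁+β₁, 1+γ₂) + ϱ^0_{γ₁+γ₂+β₁+β₂}(t-s,x-y) B(γ₂+β₁+β₂, 1+γ₁) + ϱ^{β₁}_{γ₁+γ₂+β₂}(t-s,x-y) B(γ₂+β₂, 1+γ₁) ]. -/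

import Mathlib

open MeasureTheory Real

noncomputable def varrho (d : ℕ) (β γ : ℝ) (t : ℝ) (x : EuclideanSpace ℝ (Fin d)) : ℝ :=
  t ^ γ * (min (‖x‖ ^ β) 1) * (‖x‖ + t) ^ (-((d : ℝ) + 1))

noncomputable def betaFn (γ β : ℝ) : ℝ :=
  ∫ u in (0:ℝ)..1, (1 - u) ^ (γ - 1) * u ^ (β - 1)

open intervalIntegral

lemma rpow_add_le' {x y p : ℝ} (hx : 0 ≤ x) (hy : 0 ≤ y) (hp : 0 ≤ p) (hp1 : p ≤ 1) :
    (x + y) ^ p ≤ x ^ p + y ^ p := by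
  have h := NNReal.rpow_add_le_add_rpow x.toNNReal y.toNNReal hp hp1
  have := NNReal.coe_le_coe.2 h
  simpa [NNReal.coe_rpow, Real.coe_toNNReal x hx, Real.coe_toNNReal y hy,
    ← Real.toNNReal_add hx hy, Real.coe_toNNReal _ (add_nonneg hx hy)] using this

lemma min_subadd {β u v : ℝ} (hβ : 0 ≤ β) (hβ1 : β ≤ 1) (hu : 0 ≤ u) (hv : 0 ≤ v) :
    min ((u + v) ^ β) 1 ≤ min (u ^ β) 1 + min (v ^ β) 1 := by
  rcases le_or_gt (u ^ β) 1 with h1 | h1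
  · rcases le_or_gt (v ^ β) 1 with h2 | h2
    · rw [min_eq_left h1, min_eq_left h2]
      exact le_trans (min_le_left _ _) (rpow_add_le' hu hv hβ hβ1)
    · rw [min_eq_right h2.le]
      have : min ((u+v)^β) 1 ≤ 1 := min_le_right _ _
      have h0 : 0 ≤ min (u ^ β) 1 := le_min (rpow_nonneg hu β) zero_le_one
      linarith
  · rw [min_eq_right h1.le]
    have : min ((u+v)^β) 1 ≤ 1 := min_le_right _ _
    have h0 : 0 ≤ min (v ^ β) 1 := le_min (rpow_nonneg hv β) zero_le_one
    linarith

lemma min_mono {β u v : ℝ} (hβ : 0 ≤ β) (hu : 0 ≤ u) (huv : u ≤ v) :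
    min (u ^ β) 1 ≤ min (v ^ β) 1 :=
  min_le_min (rpow_le_rpow hu huv hβ) le_rfl

variable {d : ℕ}

lemma integrable_shift {c q : ℝ} (hc : 0 < c) (hq : (d : ℝ) < q) :
    Integrable (fun z : EuclideanSpace ℝ (Fin d) => (‖z‖ + c) ^ (-q)) := by
  have hq0 : 0 < q := lt_of_le_of_lt (Nat.cast_nonneg d) hq
  have hint : Integrable (fun z : EuclideanSpace ℝ (Fin d) => (1 + ‖z‖) ^ (-q)) := by
    apply integrable_one_add_norm
    simpa [finrank_euclideanSpace_fin] using hq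
  have hcont : Continuous (fun z : EuclideanSpace ℝ (Fin d) => (‖z‖ + c) ^ (-q)) := by
    apply Continuous.rpow_const (continuous_norm.add continuous_const)
    intro z; left; exact (by positivity : (0:ℝ) < ‖z‖ + c).ne'
  refine (hint.const_mul ((min c 1) ^ (-q))).mono' hcont.aestronglyMeasurable ?_
  filter_upwards with z
  have h1 : 0 < ‖z‖ + c := by positivity
  have h2 : (0:ℝ) < min c 1 := lt_min hc one_pos
  have h3 : min c 1 * (1 + ‖z‖) ≤ ‖z‖ + c := by
    have := norm_nonneg z
    have h4 : min c 1 ≤ c := min_le_left _ _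
    have h5 : min c 1 ≤ 1 := min_le_right _ _
    nlinarith
  rw [Real.norm_eq_abs, abs_of_nonneg (rpow_nonneg h1.le _)]
  calc (‖z‖ + c) ^ (-q) ≤ (min c 1 * (1 + ‖z‖)) ^ (-q) :=
        rpow_le_rpow_of_nonpos (by positivity) h3 (by linarith)
    _ = (min c 1) ^ (-q) * (1 + ‖z‖) ^ (-q) := mul_rpow h2.le (by positivity)

lemma J_bound {d : ℕ} {c β : ℝ} (hc : 0 < c) (hβ0 : 0 ≤ β) (hβ : β ≤ 1/2) :
    ∫ z : EuclideanSpace ℝ (Fin d), (‖z‖ + c) ^ (β - ((d:ℝ) + 1))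
      ≤ (∫ z : EuclideanSpace ℝ (Fin d), (1 + ‖z‖) ^ (-((d:ℝ) + 1/2))) * c ^ (β - 1) := by
  set p : ℝ := β - ((d:ℝ) + 1) with hp
  have hsmul := MeasureTheory.Measure.integral_comp_smul (volume : Measure (EuclideanSpace ℝ (Fin d)))
    (fun z => (‖z‖ + c) ^ p) c
  rw [finrank_euclideanSpace_fin] at hsmul
  have hcd : (0:ℝ) < c ^ d := by positivity
  have h1 : (fun x : EuclideanSpace ℝ (Fin d) => (‖c • x‖ + c) ^ p)
      = fun x => c ^ p * (1 + ‖x‖) ^ p := by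
    funext x
    rw [norm_smul, Real.norm_eq_abs, abs_of_pos hc]
    rw [show c * ‖x‖ + c = c * (1 + ‖x‖) by ring, mul_rpow hc.le (by positivity)]
  rw [h1] at hsmul
  rw [MeasureTheory.integral_const_mul, smul_eq_mul, abs_of_pos (by positivity)] at hsmul
  -- hsmul : c^p * ∫ (1+‖x‖)^p = (c^d)⁻¹ * ∫ (‖z‖+c)^p
  have h2 : ∫ z : EuclideanSpace ℝ (Fin d), (‖z‖ + c) ^ p
      = c ^ (d:ℝ) * c ^ p * ∫ x : EuclideanSpace ℝ (Fin d), (1 + ‖x‖) ^ p := by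
    rw [Real.rpow_natCast]
    field_simp at hsmul ⊢
    linarith [hsmul]
  rw [h2]
  have h3 : ∫ x : EuclideanSpace ℝ (Fin d), (1 + ‖x‖) ^ p
      ≤ ∫ z : EuclideanSpace ℝ (Fin d), (1 + ‖z‖) ^ (-((d:ℝ) + 1/2)) := by
    apply MeasureTheory.integral_mono
    · have : Integrable (fun x : EuclideanSpace ℝ (Fin d) => (1 + ‖x‖) ^ (-(((d:ℝ) + 1) - β))) :=
        integrable_one_add_norm (by rw [finrank_euclideanSpace_fin]; linarith)
      simpa [hp, show -(((d:ℝ)+1) - β) = β - ((d:ℝ)+1) by ring] using this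
    · exact integrable_one_add_norm (by rw [finrank_euclideanSpace_fin]; linarith)
    · intro x
      apply rpow_le_rpow_of_exponent_le
      · have := norm_nonneg x; linarith
      · simp only [hp]; linarith
  have h4 : c ^ (d:ℝ) * c ^ p = c ^ (β - 1) := by
    rw [← Real.rpow_add hc]; congr 1; simp [hp]; ring
  rw [h4]
  rw [mul_comm]
  gcongr

noncomputable def Cnaught (d : ℕ) : ℝ :=
  ∫ z : EuclideanSpace ℝ (Fin d), (1 + ‖z‖) ^ (-((d:ℝ) + 1/2))

lemma Cnaught_nonneg (d : ℕ) : 0 ≤ Cnaught d :=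
  integral_nonneg (fun z => rpow_nonneg (by positivity) _)

lemma varrho_nonneg {d : ℕ} {β γ t : ℝ} (ht : 0 ≤ t) (x : EuclideanSpace ℝ (Fin d)) :
    0 ≤ varrho d β γ t x := by
  unfold varrho
  have h1 : 0 ≤ min (‖x‖ ^ β) 1 := le_min (rpow_nonneg (norm_nonneg _) _) zero_le_one
  have h2 : 0 ≤ (‖x‖ + t) ^ (-((d:ℝ)+1)) := rpow_nonneg (by positivity) _
  have h3 : (0:ℝ) ≤ t ^ γ := rpow_nonneg ht _
  positivity

lemma inv_rpow_bound {K A e : ℝ} (hK : 0 < K) (hA : 0 < A) (he : 0 ≤ e) (h : K ≤ 2 * A) :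
    A ^ (-e) ≤ 2 ^ e * K ^ (-e) := by
  have hKe : (0:ℝ) < K ^ e := rpow_pos_of_pos hK e
  have hAe : (0:ℝ) < A ^ e := rpow_pos_of_pos hA e
  have h1 : K ^ e ≤ 2 ^ e * A ^ e := by
    rw [← mul_rpow (by norm_num) hA.le]
    exact rpow_le_rpow hK.le h he
  rw [Real.rpow_neg hA.le, Real.rpow_neg hK.le, ← div_eq_mul_inv, le_div_iff₀ hKe,
    inv_mul_eq_div, div_le_iff₀ hAe]
  linarith

lemma inner_bound (d : ℕ) {β₁ β₂ γ₁ γ₂ a b : ℝ}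
    (hβ₁0 : 0 ≤ β₁) (hβ₁ : β₁ ≤ 1/4) (hβ₂0 : 0 ≤ β₂) (hβ₂ : β₂ ≤ 1/4)
    (ha : 0 < a) (hb : 0 < b) (x y : EuclideanSpace ℝ (Fin d)) :
    (∫ z : EuclideanSpace ℝ (Fin d), varrho d β₁ γ₁ a (x - z) * varrho d β₂ γ₂ b (z - y))
      ≤ 2 ^ ((d:ℝ)+1) * (‖x - y‖ + (a + b)) ^ (-((d:ℝ)+1)) * (a ^ γ₁ * b ^ γ₂) *
          ((min (‖x - y‖ ^ β₁) 1) * (Cnaught d * b ^ (β₂ - 1)) + Cnaught d * b ^ (β₁ + β₂ - 1))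
        + 2 ^ ((d:ℝ)+1) * (‖x - y‖ + (a + b)) ^ (-((d:ℝ)+1)) * (a ^ γ₁ * b ^ γ₂) *
          ((min (‖x - y‖ ^ β₂) 1) * (Cnaught d * a ^ (β₁ - 1)) + Cnaught d * a ^ (β₁ + β₂ - 1)) := by
  set e : ℝ := (d:ℝ) + 1 with he
  have he0 : 0 ≤ e := by positivity
  set K : ℝ := ‖x - y‖ + (a + b) with hKdef
  have hK : 0 < K := by positivity
  set m1 : ℝ := min (‖x - y‖ ^ β₁) 1 with hm1def
  set m2 : ℝ := min (‖x - y‖ ^ β₂) 1 with hm2def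
  have hm1 : 0 ≤ m1 := le_min (rpow_nonneg (norm_nonneg _) _) zero_le_one
  have hm2 : 0 ≤ m2 := le_min (rpow_nonneg (norm_nonneg _) _) zero_le_one
  set c0 : ℝ := 2 ^ e * K ^ (-e) * (a ^ γ₁ * b ^ γ₂) with hc0def
  have hc0 : 0 ≤ c0 := by
    have := rpow_nonneg hK.le (-e)
    have := rpow_nonneg ha.le γ₁
    have := rpow_nonneg hb.le γ₂
    positivity
  -- the dominating function
  set Q1 : EuclideanSpace ℝ (Fin d) → ℝ :=
    fun z => c0 * (m1 * (‖z - y‖ + b) ^ (β₂ - e) + (‖z - y‖ + b) ^ (β₁ + β₂ - e)) with hQ1def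
  set Q2 : EuclideanSpace ℝ (Fin d) → ℝ :=
    fun z => c0 * (m2 * (‖x - z‖ + a) ^ (β₁ - e) + (‖x - z‖ + a) ^ (β₁ + β₂ - e)) with hQ2def
  -- integrability of pieces
  have hint : ∀ β : ℝ, 0 ≤ β → β ≤ 1/2 → ∀ c : ℝ, 0 < c →
      Integrable (fun z : EuclideanSpace ℝ (Fin d) => (‖z‖ + c) ^ (β - e)) := by
    intro β hβ0' hβ' c hc
    have h := integrable_shift (d := d) hc (q := e - β) (by rw [he]; push_cast; linarith)
    rw [show -(e - β) = β - e by ring] at h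
    exact h
  have hi1 : Integrable (fun z : EuclideanSpace ℝ (Fin d) => (‖z - y‖ + b) ^ (β₂ - e)) :=
    (hint β₂ hβ₂0 (by linarith) b hb).comp_sub_right y
  have hi2 : Integrable (fun z : EuclideanSpace ℝ (Fin d) => (‖z - y‖ + b) ^ (β₁ + β₂ - e)) :=
    (hint (β₁ + β₂) (by linarith) (by linarith) b hb).comp_sub_right y
  have hi3 : Integrable (fun z : EuclideanSpace ℝ (Fin d) => (‖x - z‖ + a) ^ (β₁ - e)) :=
    (hint β₁ hβ₁0 (by linarith) a ha).comp_sub_left x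
  have hi4 : Integrable (fun z : EuclideanSpace ℝ (Fin d) => (‖x - z‖ + a) ^ (β₁ + β₂ - e)) :=
    (hint (β₁ + β₂) (by linarith) (by linarith) a ha).comp_sub_left x
  have hQ1int : Integrable Q1 := (((hi1.const_mul m1).add hi2).const_mul c0)
  have hQ2int : Integrable Q2 := (((hi3.const_mul m2).add hi4).const_mul c0)
  -- pointwise bound
  have hpt : ∀ z : EuclideanSpace ℝ (Fin d),
      varrho d β₁ γ₁ a (x - z) * varrho d β₂ γ₂ b (z - y) ≤ Q1 z + Q2 z := by
    intro z
    set A : ℝ := ‖x - z‖ + a with hAdef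
    set B : ℝ := ‖z - y‖ + b with hBdef
    have hA : 0 < A := by positivity
    have hB : 0 < B := by positivity
    have hKAB : K ≤ A + B := by
      have h := dist_triangle x z y
      simp only [dist_eq_norm] at h
      rw [hKdef, hAdef, hBdef]; linarith
    have hm1zA : min (‖x - z‖ ^ β₁) 1 ≤ A ^ β₁ :=
      le_trans (min_le_left _ _) (rpow_le_rpow (norm_nonneg _) (by rw [hAdef]; linarith) hβ₁0)
    have hm2zB : min (‖z - y‖ ^ β₂) 1 ≤ B ^ β₂ :=
      le_trans (min_le_left _ _) (rpow_le_rpow (norm_nonneg _) (by rw [hBdef]; linarith) hβ₂0)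
    have hm1z : min (‖x - z‖ ^ β₁) 1 ≤ m1 + B ^ β₁ := by
      have h1 : ‖x - z‖ ≤ ‖x - y‖ + ‖z - y‖ := by
        have h := dist_triangle x y z
        simp only [dist_eq_norm] at h
        rw [show ‖z - y‖ = ‖y - z‖ from norm_sub_rev z y]; linarith
      calc min (‖x - z‖ ^ β₁) 1 ≤ min ((‖x - y‖ + ‖z - y‖) ^ β₁) 1 :=
            min_mono hβ₁0 (norm_nonneg _) h1
        _ ≤ m1 + min (‖z - y‖ ^ β₁) 1 :=
            min_subadd hβ₁0 (by linarith) (norm_nonneg _) (norm_nonneg _)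
        _ ≤ m1 + B ^ β₁ := by
            have : min (‖z - y‖ ^ β₁) 1 ≤ B ^ β₁ :=
              le_trans (min_le_left _ _)
                (rpow_le_rpow (norm_nonneg _) (by rw [hBdef]; linarith) hβ₁0)
            linarith
    have hm2z : min (‖z - y‖ ^ β₂) 1 ≤ m2 + A ^ β₂ := by
      have h1 : ‖z - y‖ ≤ ‖x - y‖ + ‖x - z‖ := by
        have h := dist_triangle z x y
        simp only [dist_eq_norm] at h
        rw [show ‖z - x‖ = ‖x - z‖ from norm_sub_rev z x] at h; linarith
      calc min (‖z - y‖ ^ β₂) 1 ≤ min ((‖x - y‖ + ‖x - z‖) ^ β₂) 1 :=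
            min_mono hβ₂0 (norm_nonneg _) h1
        _ ≤ m2 + min (‖x - z‖ ^ β₂) 1 :=
            min_subadd hβ₂0 (by linarith) (norm_nonneg _) (norm_nonneg _)
        _ ≤ m2 + A ^ β₂ := by
            have : min (‖x - z‖ ^ β₂) 1 ≤ A ^ β₂ :=
              le_trans (min_le_left _ _)
                (rpow_le_rpow (norm_nonneg _) (by rw [hAdef]; linarith) hβ₂0)
            linarith
    have hm1znn : 0 ≤ min (‖x - z‖ ^ β₁) 1 := le_min (rpow_nonneg (norm_nonneg _) _) zero_le_one
    have hm2znn : 0 ≤ min (‖z - y‖ ^ β₂) 1 := le_min (rpow_nonneg (norm_nonneg _) _) zero_le_one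
    have hQ1nn : 0 ≤ Q1 z := by
      have h1 : 0 ≤ (B : ℝ) ^ (β₂ - e) := rpow_nonneg hB.le _
      have h2 : 0 ≤ (B : ℝ) ^ (β₁ + β₂ - e) := rpow_nonneg hB.le _
      rw [hQ1def]
      exact mul_nonneg hc0 (add_nonneg (mul_nonneg hm1 h1) h2)
    have hQ2nn : 0 ≤ Q2 z := by
      have h1 : 0 ≤ (A : ℝ) ^ (β₁ - e) := rpow_nonneg hA.le _
      have h2 : 0 ≤ (A : ℝ) ^ (β₁ + β₂ - e) := rpow_nonneg hA.le _
      rw [hQ2def]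
      exact mul_nonneg hc0 (add_nonneg (mul_nonneg hm2 h1) h2)
    have hlhs : varrho d β₁ γ₁ a (x - z) * varrho d β₂ γ₂ b (z - y)
        = (a ^ γ₁ * b ^ γ₂) * ((min (‖x - z‖ ^ β₁) 1) * (min (‖z - y‖ ^ β₂) 1))
            * (A ^ (-e) * B ^ (-e)) := by
      unfold varrho; rw [hAdef, hBdef, he]; ring
    rcases le_or_gt K (2 * A) with hcase | hcase
    · -- bound by Q1
      have hbnd : varrho d β₁ γ₁ a (x - z) * varrho d β₂ γ₂ b (z - y) ≤ Q1 z := by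
        rw [hlhs]
        have step1 : (a ^ γ₁ * b ^ γ₂) * ((min (‖x - z‖ ^ β₁) 1) * (min (‖z - y‖ ^ β₂) 1))
            * (A ^ (-e) * B ^ (-e))
            ≤ (a ^ γ₁ * b ^ γ₂) * ((m1 + B ^ β₁) * (B ^ β₂))
            * ((2 ^ e * K ^ (-e)) * B ^ (-e)) := by
          have hAe := inv_rpow_bound hK hA he0 hcase
          have nn1 : 0 ≤ a ^ γ₁ * b ^ γ₂ :=
            mul_nonneg (rpow_nonneg ha.le _) (rpow_nonneg hb.le _)
          have nn2 : 0 ≤ B ^ (-e) := rpow_nonneg hB.le _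
          have nn3 : 0 ≤ A ^ (-e) := rpow_nonneg hA.le _
          have nn4 : 0 ≤ m1 + B ^ β₁ := by positivity
          have h5 : (min (‖x - z‖ ^ β₁) 1) * (min (‖z - y‖ ^ β₂) 1)
              ≤ (m1 + B ^ β₁) * (B ^ β₂) :=
            mul_le_mul hm1z hm2zB hm2znn nn4
          have h6 : A ^ (-e) * B ^ (-e) ≤ (2 ^ e * K ^ (-e)) * B ^ (-e) :=
            mul_le_mul_of_nonneg_right hAe nn2
          have h7 : 0 ≤ (min (‖x - z‖ ^ β₁) 1) * (min (‖z - y‖ ^ β₂) 1) :=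
            mul_nonneg hm1znn hm2znn
          have h8 : 0 ≤ (2 ^ e * K ^ (-e)) * B ^ (-e) := by
            have := rpow_nonneg hK.le (-e); positivity
          calc (a ^ γ₁ * b ^ γ₂) * ((min (‖x - z‖ ^ β₁) 1) * (min (‖z - y‖ ^ β₂) 1))
                * (A ^ (-e) * B ^ (-e))
              ≤ (a ^ γ₁ * b ^ γ₂) * ((m1 + B ^ β₁) * (B ^ β₂)) * (A ^ (-e) * B ^ (-e)) := by
                apply mul_le_mul_of_nonneg_right _ (mul_nonneg nn3 nn2)
                exact mul_le_mul_of_nonneg_left h5 nn1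
            _ ≤ (a ^ γ₁ * b ^ γ₂) * ((m1 + B ^ β₁) * (B ^ β₂)) * ((2 ^ e * K ^ (-e)) * B ^ (-e)) := by
                apply mul_le_mul_of_nonneg_left h6
                exact mul_nonneg nn1 (mul_nonneg nn4 (rpow_nonneg hB.le _))
        refine le_trans step1 (le_of_eq ?_)
        rw [hQ1def]
        simp only
        have eB1 : (B:ℝ) ^ (β₂ - e) = B ^ β₂ * B ^ (-e) := by
          rw [← Real.rpow_add hB]; ring_nf
        have eB2 : (B:ℝ) ^ (β₁ + β₂ - e) = B ^ β₁ * (B ^ β₂ * B ^ (-e)) := by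
          rw [← Real.rpow_add hB, ← Real.rpow_add hB]; ring_nf
        rw [← hBdef, eB1, eB2, hc0def]
        ring
      linarith
    · -- K < 2A, hence K ≤ 2B; bound by Q2
      have hcase2 : K ≤ 2 * B := by linarith
      have hbnd : varrho d β₁ γ₁ a (x - z) * varrho d β₂ γ₂ b (z - y) ≤ Q2 z := by
        rw [hlhs]
        have hBe := inv_rpow_bound hK hB he0 hcase2
        have nn1 : 0 ≤ a ^ γ₁ * b ^ γ₂ :=
          mul_nonneg (rpow_nonneg ha.le _) (rpow_nonneg hb.le _)
        have nn3 : 0 ≤ A ^ (-e) := rpow_nonneg hA.le _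
        have nn4 : 0 ≤ m2 + A ^ β₂ := by positivity
        have h5 : (min (‖x - z‖ ^ β₁) 1) * (min (‖z - y‖ ^ β₂) 1)
            ≤ (A ^ β₁) * (m2 + A ^ β₂) :=
          mul_le_mul hm1zA hm2z hm2znn (rpow_nonneg hA.le _)
        have h6 : A ^ (-e) * B ^ (-e) ≤ A ^ (-e) * (2 ^ e * K ^ (-e)) :=
          mul_le_mul_of_nonneg_left hBe nn3
        have step1 : (a ^ γ₁ * b ^ γ₂) * ((min (‖x - z‖ ^ β₁) 1) * (min (‖z - y‖ ^ β₂) 1))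
            * (A ^ (-e) * B ^ (-e))
            ≤ (a ^ γ₁ * b ^ γ₂) * ((A ^ β₁) * (m2 + A ^ β₂))
            * (A ^ (-e) * (2 ^ e * K ^ (-e))) := by
          calc (a ^ γ₁ * b ^ γ₂) * ((min (‖x - z‖ ^ β₁) 1) * (min (‖z - y‖ ^ β₂) 1))
                * (A ^ (-e) * B ^ (-e))
              ≤ (a ^ γ₁ * b ^ γ₂) * ((A ^ β₁) * (m2 + A ^ β₂)) * (A ^ (-e) * B ^ (-e)) := by
                apply mul_le_mul_of_nonneg_right _
                  (mul_nonneg nn3 (rpow_nonneg hB.le _))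
                exact mul_le_mul_of_nonneg_left h5 nn1
            _ ≤ (a ^ γ₁ * b ^ γ₂) * ((A ^ β₁) * (m2 + A ^ β₂)) * (A ^ (-e) * (2 ^ e * K ^ (-e))) := by
                apply mul_le_mul_of_nonneg_left h6
                exact mul_nonneg nn1 (mul_nonneg (rpow_nonneg hA.le _) nn4)
        refine le_trans step1 (le_of_eq ?_)
        rw [hQ2def]
        simp only
        have eA1 : (A:ℝ) ^ (β₁ - e) = A ^ β₁ * A ^ (-e) := by
          rw [← Real.rpow_add hA]; ring_nf
        have eA2 : (A:ℝ) ^ (β₁ + β₂ - e) = A ^ β₁ * (A ^ β₂ * A ^ (-e)) := by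
          rw [← Real.rpow_add hA, ← Real.rpow_add hA]; ring_nf
        rw [← hAdef, eA1, eA2, hc0def]
        ring
      linarith
  -- integrate the pointwise bound
  have hmono : (∫ z : EuclideanSpace ℝ (Fin d),
      varrho d β₁ γ₁ a (x - z) * varrho d β₂ γ₂ b (z - y)) ≤ ∫ z, (Q1 z + Q2 z) := by
    apply integral_mono_of_nonneg
    · filter_upwards with z
      exact mul_nonneg (varrho_nonneg ha.le _) (varrho_nonneg hb.le _)
    · exact hQ1int.add hQ2int
    · filter_upwards with z using hpt z
  refine le_trans hmono ?_
  rw [integral_add hQ1int hQ2int]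
  have hJ : ∀ β : ℝ, 0 ≤ β → β ≤ 1/2 → ∀ c : ℝ, 0 < c →
      (∫ z : EuclideanSpace ℝ (Fin d), (‖z‖ + c) ^ (β - e)) ≤ Cnaught d * c ^ (β - 1) := by
    intro β h0 h1 c hc
    have := J_bound (d := d) hc h0 h1
    rw [he]
    exact this
  have hI1 : ∫ z, Q1 z ≤ c0 * (m1 * (Cnaught d * b ^ (β₂ - 1)) + Cnaught d * b ^ (β₁ + β₂ - 1)) := by
    rw [hQ1def]
    simp only
    rw [MeasureTheory.integral_const_mul, integral_add (hi1.const_mul m1) hi2,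
      MeasureTheory.integral_const_mul]
    have t1 : (∫ z : EuclideanSpace ℝ (Fin d), (‖z - y‖ + b) ^ (β₂ - e))
        = ∫ z : EuclideanSpace ℝ (Fin d), (‖z‖ + b) ^ (β₂ - e) :=
      integral_sub_right_eq_self (fun z : EuclideanSpace ℝ (Fin d) => (‖z‖ + b) ^ (β₂ - e)) y
    have t2 : (∫ z : EuclideanSpace ℝ (Fin d), (‖z - y‖ + b) ^ (β₁ + β₂ - e))
        = ∫ z : EuclideanSpace ℝ (Fin d), (‖z‖ + b) ^ (β₁ + β₂ - e) :=
      integral_sub_right_eq_self (fun z : EuclideanSpace ℝ (Fin d) => (‖z‖ + b) ^ (β₁ + β₂ - e)) y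
    rw [t1, t2]
    have b1 := hJ β₂ hβ₂0 (by linarith) b hb
    have b2 := hJ (β₁ + β₂) (by linarith) (by linarith) b hb
    have hgoal : m1 * ∫ z : EuclideanSpace ℝ (Fin d), (‖z‖ + b) ^ (β₂ - e) ≤ m1 * (Cnaught d * b ^ (β₂ - 1)) :=
      mul_le_mul_of_nonneg_left b1 hm1
    exact mul_le_mul_of_nonneg_left (by linarith) hc0
  have hI2 : ∫ z, Q2 z ≤ c0 * (m2 * (Cnaught d * a ^ (β₁ - 1)) + Cnaught d * a ^ (β₁ + β₂ - 1)) := by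
    rw [hQ2def]
    simp only
    rw [MeasureTheory.integral_const_mul, integral_add (hi3.const_mul m2) hi4,
      MeasureTheory.integral_const_mul]
    have t1 : (∫ z : EuclideanSpace ℝ (Fin d), (‖x - z‖ + a) ^ (β₁ - e))
        = ∫ z : EuclideanSpace ℝ (Fin d), (‖z‖ + a) ^ (β₁ - e) :=
      integral_sub_left_eq_self (fun z : EuclideanSpace ℝ (Fin d) => (‖z‖ + a) ^ (β₁ - e)) volume x
    have t2 : (∫ z : EuclideanSpace ℝ (Fin d), (‖x - z‖ + a) ^ (β₁ + β₂ - e))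
        = ∫ z : EuclideanSpace ℝ (Fin d), (‖z‖ + a) ^ (β₁ + β₂ - e) :=
      integral_sub_left_eq_self (fun z : EuclideanSpace ℝ (Fin d) => (‖z‖ + a) ^ (β₁ + β₂ - e)) volume x
    rw [t1, t2]
    have b1 := hJ β₁ hβ₁0 (by linarith) a ha
    have b2 := hJ (β₁ + β₂) (by linarith) (by linarith) a ha
    have hgoal : m2 * ∫ z : EuclideanSpace ℝ (Fin d), (‖z‖ + a) ^ (β₁ - e) ≤ m2 * (Cnaught d * a ^ (β₁ - 1)) :=
      mul_le_mul_of_nonneg_left b1 hm2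
    exact mul_le_mul_of_nonneg_left (by linarith) hc0
  have hfin : c0 * (m1 * (Cnaught d * b ^ (β₂ - 1)) + Cnaught d * b ^ (β₁ + β₂ - 1))
      = 2 ^ e * K ^ (-e) * (a ^ γ₁ * b ^ γ₂) *
          (m1 * (Cnaught d * b ^ (β₂ - 1)) + Cnaught d * b ^ (β₁ + β₂ - 1)) := by
    rw [hc0def]
  have hfin2 : c0 * (m2 * (Cnaught d * a ^ (β₁ - 1)) + Cnaught d * a ^ (β₁ + β₂ - 1))
      = 2 ^ e * K ^ (-e) * (a ^ γ₁ * b ^ γ₂) *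
          (m2 * (Cnaught d * a ^ (β₁ - 1)) + Cnaught d * a ^ (β₁ + β₂ - 1)) := by
    rw [hc0def]
  rw [he] at hfin hfin2
  linarith [hI1, hI2]

lemma betaFn_nonneg (γ β : ℝ) : 0 ≤ betaFn γ β := by
  apply intervalIntegral.integral_nonneg zero_le_one
  intro u hu
  have h1 : (0:ℝ) ≤ 1 - u := by linarith [hu.2]
  exact mul_nonneg (rpow_nonneg h1 _) (rpow_nonneg hu.1 _)

lemma betaFn_symm (γ β : ℝ) : betaFn γ β = betaFn β γ := by
  unfold betaFn
  have := intervalIntegral.integral_comp_sub_left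
    (a := 0) (b := 1) (fun u => (1 - u) ^ (β - 1) * u ^ (γ - 1)) 1
  simp only [sub_zero, sub_self, sub_sub_cancel] at this
  rw [← this]
  apply intervalIntegral.integral_congr
  intro u _
  simp only
  ring

lemma timeIntegrable {p q s t : ℝ} (hp : -1 < p) (hq : -1 < q) (hst : s < t) :
    IntervalIntegrable (fun r => (t - r) ^ p * (r - s) ^ q) volume s t := by
  set m := (s + t) / 2 with hm
  have hsm : s < m := by simp [hm]; linarith
  have hmt : m < t := by simp [hm]; linarith
  have part1 : IntervalIntegrable (fun r => (t - r) ^ p * (r - s) ^ q) volume s m := by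
    have hg : IntervalIntegrable (fun r => (r - s) ^ q) volume s m := by
      have := (intervalIntegral.intervalIntegrable_rpow' hq (a := 0) (b := m - s)).comp_sub_right s
      simpa using this
    apply hg.continuousOn_mul
    apply ContinuousOn.rpow_const
    · exact (continuous_const.sub continuous_id).continuousOn
    · intro r hr
      rw [Set.uIcc_of_le hsm.le] at hr
      left; have := hr.2; intro hc; nlinarith [hr.2]
  have part2 : IntervalIntegrable (fun r => (t - r) ^ p * (r - s) ^ q) volume m t := by
    have hf : IntervalIntegrable (fun r => (t - r) ^ p) volume m t := by
      have := (intervalIntegral.intervalIntegrable_rpow' hp (a := t - m) (b := 0)).comp_sub_left t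
      simpa using this
    apply hf.mul_continuousOn
    apply ContinuousOn.rpow_const
    · exact (continuous_id.sub continuous_const).continuousOn
    · intro r hr
      rw [Set.uIcc_of_le hmt.le] at hr
      left; intro hc; nlinarith [hr.1]
  exact part1.trans part2

lemma timeValue {s t : ℝ} (hst : s < t) (p q : ℝ) :
    ∫ r in s..t, (t - r) ^ p * (r - s) ^ q
      = (t - s) ^ (p + q + 1) * betaFn (q + 1) (p + 1) := by
  set T := t - s with hT
  have hT0 : 0 < T := by simp [hT]; linarith
  have step1 : ∫ r in s..t, (t - r) ^ p * (r - s) ^ q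
      = ∫ u in (0:ℝ)..T, (T - u) ^ p * u ^ q := by
    have := intervalIntegral.integral_comp_sub_right (a := s) (b := t)
      (fun u => (T - u) ^ p * u ^ q) s
    simp only [sub_self] at this
    rw [← this]
    apply intervalIntegral.integral_congr
    intro r _
    simp only [hT]
    ring_nf
  have step2 : ∫ u in (0:ℝ)..T, (T - u) ^ p * u ^ q
      = T * ∫ x in (0:ℝ)..1, (T - T * x) ^ p * (T * x) ^ q := by
    have := intervalIntegral.integral_comp_mul_left (a := (0:ℝ)) (b := 1)
      (fun u => (T - u) ^ p * u ^ q) (ne_of_gt hT0)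
    rw [mul_zero, mul_one] at this
    rw [this, smul_eq_mul, ← mul_assoc, mul_inv_cancel₀ (ne_of_gt hT0), one_mul]
  have step3 : ∫ x in (0:ℝ)..1, (T - T * x) ^ p * (T * x) ^ q
      = T ^ (p + q) * ∫ x in (0:ℝ)..1, (1 - x) ^ p * x ^ q := by
    rw [← intervalIntegral.integral_const_mul]
    apply intervalIntegral.integral_congr
    intro x hx
    rw [Set.uIcc_of_le zero_le_one] at hx
    have h1 : (0:ℝ) ≤ 1 - x := by linarith [hx.2]
    have e1 : T - T * x = T * (1 - x) := by ring
    simp only [e1, mul_rpow hT0.le h1, mul_rpow hT0.le hx.1, Real.rpow_add hT0]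
    ring
  have step4 : ∫ x in (0:ℝ)..1, (1 - x) ^ p * x ^ q = betaFn (q + 1) (p + 1) := by
    unfold betaFn
    have := intervalIntegral.integral_comp_sub_left (a := (0:ℝ)) (b := 1)
      (fun u => (1 - u) ^ (q + 1 - 1) * u ^ (p + 1 - 1)) 1
    simp only [sub_zero, sub_self, sub_sub_cancel] at this
    rw [← this]
    apply intervalIntegral.integral_congr
    intro x _
    simp only
    rw [show q + 1 - 1 = q by ring, show p + 1 - 1 = p by ring]
    ring
  rw [step1, step2, step3, step4, ← mul_assoc]
  congr 1
  rw [show p + q + 1 = p + (q + 1) by ring, Real.rpow_add hT0, Real.rpow_add hT0, Real.rpow_add hT0 q 1, Real.rpow_one]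
  ring
theorem stmt_16 (d : ℕ) (hd : 1 ≤ d) :
    ∃ C > (0 : ℝ), ∀ β₁ β₂ γ₁ γ₂ : ℝ,
      0 ≤ β₁ → β₁ ≤ 1/4 → 0 ≤ β₂ → β₂ ≤ 1/4 → -β₁ < γ₁ → -β₂ < γ₂ →
      ∀ s t : ℝ, 0 ≤ s → s < t → ∀ x y : EuclideanSpace ℝ (Fin d),
        (∫ r in s..t, ∫ z : EuclideanSpace ℝ (Fin d),
            varrho d β₁ γ₁ (t - r) (x - z) * varrho d β₂ γ₂ (r - s) (z - y))
          ≤ C * (varrho d 0 (γ₁ + γ₂ + β₁ + β₂) (t - s) (x - y)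
                  * betaFn (γ₁ + β₁ + β₂) (1 + γ₂)
              + varrho d β₂ (γ₁ + γ₂ + β₁) (t - s) (x - y) * betaFn (γ₁ + β₁) (1 + γ₂)
              + varrho d 0 (γ₁ + γ₂ + β₁ + β₂) (t - s) (x - y)
                  * betaFn (γ₂ + β₁ + β₂) (1 + γ₁)
              + varrho d β₁ (γ₁ + γ₂ + β₂) (t - s) (x - y)
                  * betaFn (γ₂ + β₂) (1 + γ₁)) := by
  refine ⟨2 ^ ((d:ℝ)+1) * (Cnaught d + 1),
    mul_pos (by positivity) (by linarith [Cnaught_nonneg d]), ?_⟩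
  intro β₁ β₂ γ₁ γ₂ hβ₁0 hβ₁ hβ₂0 hβ₂ hγ₁ hγ₂ s t hs hst x y
  have hT0 : 0 < t - s := by linarith
  have hK : 0 < ‖x - y‖ + (t - s) := by positivity
  have hm1 : 0 ≤ min (‖x - y‖ ^ β₁) 1 := le_min (rpow_nonneg (norm_nonneg _) _) zero_le_one
  have hm2 : 0 ≤ min (‖x - y‖ ^ β₂) 1 := le_min (rpow_nonneg (norm_nonneg _) _) zero_le_one
  have hbr : 0 ≤ varrho d 0 (γ₁ + γ₂ + β₁ + β₂) (t - s) (x - y) * betaFn (γ₁ + β₁ + β₂) (1 + γ₂)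
      + varrho d β₂ (γ₁ + γ₂ + β₁) (t - s) (x - y) * betaFn (γ₁ + β₁) (1 + γ₂)
      + varrho d 0 (γ₁ + γ₂ + β₁ + β₂) (t - s) (x - y) * betaFn (γ₂ + β₁ + β₂) (1 + γ₁)
      + varrho d β₁ (γ₁ + γ₂ + β₂) (t - s) (x - y) * betaFn (γ₂ + β₂) (1 + γ₁) := by
    have n1 := varrho_nonneg (d := d) (β := 0) (γ := γ₁ + γ₂ + β₁ + β₂) hT0.le (x - y)
    have n2 := varrho_nonneg (d := d) (β := β₂) (γ := γ₁ + γ₂ + β₁) hT0.le (x - y)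
    have n3 := varrho_nonneg (d := d) (β := β₁) (γ := γ₁ + γ₂ + β₂) hT0.le (x - y)
    have b1 := betaFn_nonneg (γ₁ + β₁ + β₂) (1 + γ₂)
    have b2 := betaFn_nonneg (γ₁ + β₁) (1 + γ₂)
    have b3 := betaFn_nonneg (γ₂ + β₁ + β₂) (1 + γ₁)
    have b4 := betaFn_nonneg (γ₂ + β₂) (1 + γ₁)
    have := mul_nonneg n1 b1
    have := mul_nonneg n2 b2
    have := mul_nonneg n1 b3
    have := mul_nonneg n3 b4
    linarith
  by_cases hInt : IntervalIntegrable (fun r => ∫ z : EuclideanSpace ℝ (Fin d),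
      varrho d β₁ γ₁ (t - r) (x - z) * varrho d β₂ γ₂ (r - s) (z - y)) volume s t
  swap
  · rw [intervalIntegral.integral_undef hInt]
    exact mul_nonneg (le_of_lt (mul_pos (by positivity) (by linarith [Cnaught_nonneg d]))) hbr
  -- integrable case
  have hg1 : -1 < γ₁ := by linarith
  have hg2 : -1 < γ₂ := by linarith
  have hq1 : -1 < γ₂ + β₂ - 1 := by linarith
  have hq2 : -1 < γ₂ + β₁ + β₂ - 1 := by linarith
  have hp3 : -1 < γ₁ + β₁ - 1 := by linarith
  have hp4 : -1 < γ₁ + β₁ + β₂ - 1 := by linarith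
  have hti1 := timeIntegrable hg1 hq1 hst
  have hti2 := timeIntegrable hg1 hq2 hst
  have hti3 := timeIntegrable hp3 hg2 hst
  have hti4 := timeIntegrable hp4 hg2 hst
  set c2 : ℝ := 2 ^ ((d:ℝ)+1) * Cnaught d * (‖x - y‖ + (t - s)) ^ (-((d:ℝ)+1)) with hc2def
  set G : ℝ → ℝ := fun r => c2 *
      (min (‖x - y‖ ^ β₁) 1 * ((t - r) ^ γ₁ * (r - s) ^ (γ₂ + β₂ - 1))
        + (t - r) ^ γ₁ * (r - s) ^ (γ₂ + β₁ + β₂ - 1)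
        + min (‖x - y‖ ^ β₂) 1 * ((t - r) ^ (γ₁ + β₁ - 1) * (r - s) ^ γ₂)
        + (t - r) ^ (γ₁ + β₁ + β₂ - 1) * (r - s) ^ γ₂) with hGdef
  have hGint : IntervalIntegrable G volume s t := by
    apply IntervalIntegrable.const_mul
    exact (((hti1.const_mul _).add hti2).add (hti3.const_mul _)).add hti4
  have hle : (∫ r in s..t, ∫ z : EuclideanSpace ℝ (Fin d),
      varrho d β₁ γ₁ (t - r) (x - z) * varrho d β₂ γ₂ (r - s) (z - y))
      ≤ ∫ r in s..t, G r := by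
    apply intervalIntegral.integral_mono_ae_restrict hst.le hInt hGint
    rw [← MeasureTheory.Measure.restrict_congr_set Ioo_ae_eq_Icc]
    filter_upwards [ae_restrict_mem measurableSet_Ioo] with r hr
    have ha : 0 < t - r := by linarith [hr.2]
    have hb : 0 < r - s := by linarith [hr.1]
    have hib := inner_bound d (γ₁ := γ₁) (γ₂ := γ₂) hβ₁0 hβ₁ hβ₂0 hβ₂ ha hb x y
    rw [show t - r + (r - s) = t - s by ring] at hib
    refine le_trans hib (le_of_eq ?_)
    have ea1 : (r - s) ^ (γ₂ + β₂ - 1) = (r - s) ^ γ₂ * (r - s) ^ (β₂ - 1) := by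
      rw [← Real.rpow_add hb]; ring_nf
    have ea2 : (r - s) ^ (γ₂ + β₁ + β₂ - 1) = (r - s) ^ γ₂ * (r - s) ^ (β₁ + β₂ - 1) := by
      rw [← Real.rpow_add hb]; ring_nf
    have ea3 : (t - r) ^ (γ₁ + β₁ - 1) = (t - r) ^ γ₁ * (t - r) ^ (β₁ - 1) := by
      rw [← Real.rpow_add ha]; ring_nf
    have ea4 : (t - r) ^ (γ₁ + β₁ + β₂ - 1) = (t - r) ^ γ₁ * (t - r) ^ (β₁ + β₂ - 1) := by
      rw [← Real.rpow_add ha]; ring_nf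
    rw [hGdef]
    simp only
    rw [ea1, ea2, ea3, ea4, hc2def]
    ring
  refine le_trans hle ?_
  have hval : ∫ r in s..t, G r = c2 *
      (min (‖x - y‖ ^ β₁) 1 * ((t - s) ^ (γ₁ + (γ₂ + β₂ - 1) + 1) * betaFn (γ₂ + β₂ - 1 + 1) (γ₁ + 1))
        + (t - s) ^ (γ₁ + (γ₂ + β₁ + β₂ - 1) + 1) * betaFn (γ₂ + β₁ + β₂ - 1 + 1) (γ₁ + 1)
        + min (‖x - y‖ ^ β₂) 1 * ((t - s) ^ (γ₁ + β₁ - 1 + γ₂ + 1) * betaFn (γ₂ + 1) (γ₁ + β₁ - 1 + 1))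
        + (t - s) ^ (γ₁ + β₁ + β₂ - 1 + γ₂ + 1) * betaFn (γ₂ + 1) (γ₁ + β₁ + β₂ - 1 + 1)) := by
    rw [hGdef]
    simp only
    rw [intervalIntegral.integral_const_mul]
    congr 1
    rw [intervalIntegral.integral_add (((hti1.const_mul _).add hti2).add (hti3.const_mul _)) hti4,
      intervalIntegral.integral_add ((hti1.const_mul _).add hti2) (hti3.const_mul _),
      intervalIntegral.integral_add (hti1.const_mul _) hti2,
      intervalIntegral.integral_const_mul, intervalIntegral.integral_const_mul,
      timeValue hst γ₁ (γ₂ + β₂ - 1), timeValue hst γ₁ (γ₂ + β₁ + β₂ - 1),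
      timeValue hst (γ₁ + β₁ - 1) γ₂, timeValue hst (γ₁ + β₁ + β₂ - 1) γ₂]
  rw [hval]
  have heq : c2 *
      (min (‖x - y‖ ^ β₁) 1 * ((t - s) ^ (γ₁ + (γ₂ + β₂ - 1) + 1) * betaFn (γ₂ + β₂ - 1 + 1) (γ₁ + 1))
        + (t - s) ^ (γ₁ + (γ₂ + β₁ + β₂ - 1) + 1) * betaFn (γ₂ + β₁ + β₂ - 1 + 1) (γ₁ + 1)
        + min (‖x - y‖ ^ β₂) 1 * ((t - s) ^ (γ₁ + β₁ - 1 + γ₂ + 1) * betaFn (γ₂ + 1) (γ₁ + β₁ - 1 + 1))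
        + (t - s) ^ (γ₁ + β₁ + β₂ - 1 + γ₂ + 1) * betaFn (γ₂ + 1) (γ₁ + β₁ + β₂ - 1 + 1))
      = 2 ^ ((d:ℝ)+1) * Cnaught d *
        (varrho d 0 (γ₁ + γ₂ + β₁ + β₂) (t - s) (x - y) * betaFn (γ₁ + β₁ + β₂) (1 + γ₂)
          + varrho d β₂ (γ₁ + γ₂ + β₁) (t - s) (x - y) * betaFn (γ₁ + β₁) (1 + γ₂)
          + varrho d 0 (γ₁ + γ₂ + β₁ + β₂) (t - s) (x - y) * betaFn (γ₂ + β₁ + β₂) (1 + γ₁)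
          + varrho d β₁ (γ₁ + γ₂ + β₂) (t - s) (x - y) * betaFn (γ₂ + β₂) (1 + γ₁)) := by
    unfold varrho
    rw [Real.rpow_zero, min_self, betaFn_symm (γ₁ + β₁ + β₂) (1 + γ₂),
      betaFn_symm (γ₁ + β₁) (1 + γ₂), hc2def]
    ring_nf
  rw [heq]
  have hCle : Cnaught d ≤ Cnaught d + 1 := by linarith
  calc 2 ^ ((d:ℝ)+1) * Cnaught d * _ ≤ 2 ^ ((d:ℝ)+1) * (Cnaught d + 1) * _ :=
    mul_le_mul_of_nonneg_right (mul_le_mul_of_nonneg_left hCle (by positivity)) hbr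
  _ = _ := rfl
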